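/- Let X be a lower Hessenberg matrix (X ∈ ε + 𝔟_-, i.e. superdiagonal entries equal 1, entries above the superdiagonal equal 0). Then det(X - ηI)_{(r)}, the determinant of the matrix obtained by removing the first r rows and last r columns of X - ηI, is a polynomial in η of degree n - 2r whose leading coefficient is (-1)^{n-2r} times a polynomial in the entries of X strictly below the diagonal. -/

import Mathlib

open Matrix Polynomial

/-- The `r`-chop characteristic polynomial `det (X - η I)_{(r)}`: the determinant (as a
polynomial in `η`) of the matrix obtained from `X - η I` by deleting the first `r` rows
and the last `r` columns. -/
noncomputable def chopDet (n r : ℕ) (hr : 2 * r ≤ n) (X : Matrix (Fin n) (Fin n) ℝ) :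
    Polynomial ℝ :=
  Matrix.det
    ((X.map (Polynomial.C) - (Polynomial.X : Polynomial ℝ) • 1).submatrix
      (fun i : Fin (n - r) => (⟨(i : ℕ) + r, by have := i.isLt; omega⟩ : Fin n))
      (fun j : Fin (n - r) => (⟨(j : ℕ), by have := j.isLt; omega⟩ : Fin n)))

/-- `X` is lower Hessenberg: superdiagonal entries equal `1`, entries above the
superdiagonal vanish. -/
def IsLowerHessenberg {n : ℕ} (X : Matrix (Fin n) (Fin n) ℝ) : Prop :=
  (∀ i j : Fin n, (j : ℕ) = (i : ℕ) + 1 → X i j = 1) ∧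
  (∀ i j : Fin n, (i : ℕ) + 1 < (j : ℕ) → X i j = 0)

/-- Auxiliary: coefficient of a product at the sum of degree bounds. -/
lemma coeff_prod_aux {ι : Type*} (s : Finset ι) (f : ι → Polynomial ℝ) (d : ι → ℕ)
    (h : ∀ i ∈ s, (f i).natDegree ≤ d i) :
    (∏ i ∈ s, f i).coeff (∑ i ∈ s, d i) = ∏ i ∈ s, (f i).coeff (d i) := by
  classical
  induction s using Finset.cons_induction with
  | empty => simp
  | cons a s ha ih =>
    rw [Finset.prod_cons, Finset.sum_cons, Finset.prod_cons,
      coeff_mul_add_eq_of_natDegree_le (h a (Finset.mem_cons_self a s))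
        ((natDegree_prod_le s f).trans
          (Finset.sum_le_sum fun i hi => h i (Finset.mem_cons_of_mem hi))),
      ih fun i hi => h i (Finset.mem_cons_of_mem hi)]

/-- card of the tail filter in `Fin m`. -/
lemma card_filter_aux (m r : ℕ) :
    (Finset.univ.filter fun j : Fin m => r ≤ (j : ℕ)).card = m - r := by
  classical
  rcases le_or_gt m r with h | h
  · rw [Finset.filter_false_of_mem, Finset.card_empty]
    · omega
    · intro j _
      have := j.isLt; omega
  · have : ((Finset.univ.filter fun j : Fin m => r ≤ (j : ℕ)) : Finset (Fin m)).card =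
        (Finset.univ : Finset (Fin (m - r))).card := by
      refine Finset.card_bij' (fun j _ => (⟨(j : ℕ) - r, by have := j.2; omega⟩ : Fin (m - r)))
        (fun k _ => (⟨(k : ℕ) + r, by have := k.isLt; omega⟩ : Fin m)) ?_ ?_ ?_ ?_
      · intro j hj
        exact Finset.mem_univ _
      · intro k _
        simp
      · intro j hj
        simp only [Finset.mem_filter] at hj
        simp [Fin.ext_iff]
        omega
      · intro k _
        simp [Fin.ext_iff]
    rw [this, Finset.card_univ, Fintype.card_fin]

/-- for a lower Hessenberg matrix `X`, `det (X - η I)_{(r)}` is a polynomial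
in `η` of degree `n - 2r` whose leading coefficient (the coefficient of `η^{n-2r}`) is
`(-1)^{n-2r}` times a polynomial in the entries of `X` strictly below the diagonal. -/
theorem chopDet_degree_leadingCoeff (n r : ℕ) (hr : 2 * r ≤ n) :
    ∃ P : MvPolynomial {p : Fin n × Fin n // (p.2 : ℕ) < (p.1 : ℕ)} ℝ,
      ∀ X : Matrix (Fin n) (Fin n) ℝ, IsLowerHessenberg X →
        (chopDet n r hr X).natDegree ≤ n - 2 * r ∧
        (chopDet n r hr X).coeff (n - 2 * r) =
          (-1 : ℝ) ^ (n - 2 * r) *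
            MvPolynomial.eval (fun p => X p.1.1 p.1.2) P := by
  classical
  set m := n - r with hm
  set d : Fin m → ℕ := fun j => if r ≤ (j : ℕ) then 1 else 0 with hd
  have hsum : ∑ j, d j = n - 2 * r := by
    have h1 : ∑ j : Fin m, d j =
        (Finset.univ.filter fun j : Fin m => r ≤ (j : ℕ)).card := by
      rw [hd, Finset.card_eq_sum_ones, Finset.sum_filter]
    rw [h1, card_filter_aux]
    omega
  set S : Finset (Equiv.Perm (Fin m)) :=
    Finset.univ.filter fun σ => ∀ j : Fin m, r ≤ (j : ℕ) → ((σ j : ℕ) + r = (j : ℕ)) with hS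
  have hlt : ∀ (σ : Equiv.Perm (Fin m)) (j : Fin m), (σ j : ℕ) + r < n := by
    intro σ j; have := (σ j).isLt; omega
  have hjn : ∀ j : Fin m, (j : ℕ) < n := fun j => by have := j.isLt; omega
  set v : Equiv.Perm (Fin m) → Fin m →
      MvPolynomial {p : Fin n × Fin n // (p.2 : ℕ) < (p.1 : ℕ)} ℝ :=
    fun σ j =>
      if h : (j : ℕ) < r then
        MvPolynomial.X ⟨(⟨(σ j : ℕ) + r, hlt σ j⟩, ⟨(j : ℕ), hjn j⟩), by simp; omega⟩
      else 1 with hv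
  refine ⟨∑ σ ∈ S, MvPolynomial.C ((Equiv.Perm.sign σ : ℤ) : ℝ) * ∏ j, v σ j, fun X _ => ?_⟩
  set M : Matrix (Fin m) (Fin m) (Polynomial ℝ) :=
    ((X.map (Polynomial.C) - (Polynomial.X : Polynomial ℝ) • 1).submatrix
      (fun i : Fin (n - r) => (⟨(i : ℕ) + r, by have := i.isLt; omega⟩ : Fin n))
      (fun j : Fin (n - r) => (⟨(j : ℕ), by have := j.isLt; omega⟩ : Fin n))) with hM
  have hMe : ∀ a b : Fin m, M a b =
      C (X ⟨(a : ℕ) + r, by have := a.isLt; omega⟩ ⟨(b : ℕ), hjn b⟩) -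
        (if (a : ℕ) + r = (b : ℕ) then (Polynomial.X : Polynomial ℝ) else 0) := by
    intro a b
    simp [hM, Matrix.submatrix_apply, Matrix.sub_apply, Matrix.map_apply, Matrix.smul_apply,
      Matrix.one_apply, Fin.ext_iff, smul_eq_mul, mul_ite, mul_one, mul_zero]
  have hdeg : ∀ (a b : Fin m), (M a b).natDegree ≤ d b := by
    intro a b
    rw [hMe a b, hd]
    dsimp only
    split_ifs with h1 h2 h2
    · exact (natDegree_sub_le _ _).trans (by simp)
    · omega
    · simp
    · simp
  have hchop : chopDet n r hr X = M.det := rfl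
  constructor
  · rw [hchop, Matrix.det_apply']
    refine natDegree_sum_le_of_forall_le _ _ fun σ _ => ?_
    refine natDegree_mul_le.trans ?_
    rw [natDegree_intCast]
    simpa using (natDegree_prod_le Finset.univ fun j => M (σ j) j).trans
      (le_of_le_of_eq (Finset.sum_le_sum fun j _ => hdeg (σ j) j) hsum)
  · rw [hchop, Matrix.det_apply', finset_sum_coeff]
    have key : ∀ σ : Equiv.Perm (Fin m),
        (((Equiv.Perm.sign σ : ℤ) : Polynomial ℝ) * ∏ j, M (σ j) j).coeff (n - 2 * r) =
        if σ ∈ S then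
          ((Equiv.Perm.sign σ : ℤ) : ℝ) * ((-1 : ℝ) ^ (n - 2 * r) *
            ∏ j : Fin m, (if h : (j : ℕ) < r then
              X ⟨(σ j : ℕ) + r, hlt σ j⟩ ⟨(j : ℕ), hjn j⟩ else 1))
        else 0 := by
      intro σ
      have hcp : (∏ j : Fin m, M (σ j) j).coeff (n - 2 * r) =
          ∏ j : Fin m, (M (σ j) j).coeff (d j) := by
        have h0 := coeff_prod_aux Finset.univ (fun j => M (σ j) j) d fun j _ => hdeg (σ j) j
        rw [hsum] at h0
        simpa using h0
      rw [← map_intCast (C : ℝ →+* Polynomial ℝ), coeff_C_mul, hcp,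
        ← Finset.prod_filter_mul_prod_filter_not Finset.univ (fun j : Fin m => r ≤ (j : ℕ))]
      by_cases hσ : σ ∈ S
      · rw [if_pos hσ]
        have h1 : ∀ j ∈ Finset.univ.filter fun j : Fin m => r ≤ (j : ℕ),
            (M (σ j) j).coeff (d j) = -1 := by
          intro j hj
          simp only [Finset.mem_filter] at hj
          have hσj := (Finset.mem_filter.mp hσ).2 j hj.2
          rw [hMe, hd]
          simp [hj.2, hσj]
        have h2 : ∀ j ∈ Finset.univ.filter fun j : Fin m => ¬ r ≤ (j : ℕ),
            (M (σ j) j).coeff (d j) =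
              (if h : (j : ℕ) < r then
                X ⟨(σ j : ℕ) + r, hlt σ j⟩ ⟨(j : ℕ), hjn j⟩ else 1) := by
          intro j hj
          simp only [Finset.mem_filter] at hj
          have hjr : (j : ℕ) < r := by omega
          have hne : ¬ ((σ j : ℕ) + r = (j : ℕ)) := by omega
          rw [hMe, hd]
          simp [hjr, hne, not_le.mpr hjr]
        rw [Finset.prod_congr rfl h1, Finset.prod_congr rfl h2, Finset.prod_const,
          card_filter_aux m r]
        have hmr : m - r = n - 2 * r := by omega
        rw [hmr]
        have h3 : (∏ j : Fin m, (if h : (j : ℕ) < r then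
              X ⟨(σ j : ℕ) + r, hlt σ j⟩ ⟨(j : ℕ), hjn j⟩ else 1)) =
            ∏ j ∈ Finset.univ.filter fun j : Fin m => ¬ r ≤ (j : ℕ),
              (if h : (j : ℕ) < r then
                X ⟨(σ j : ℕ) + r, hlt σ j⟩ ⟨(j : ℕ), hjn j⟩ else 1) := by
          rw [← Finset.prod_filter_mul_prod_filter_not Finset.univ
            (fun j : Fin m => r ≤ (j : ℕ)),
            Finset.prod_eq_one (fun j hj => by
              simp only [Finset.mem_filter] at hj
              rw [dif_neg (by omega)]), one_mul]
        rw [h3]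
      · rw [if_neg hσ]
        simp only [hS, Finset.mem_filter, Finset.mem_univ, true_and, not_forall] at hσ
        obtain ⟨j, hjr, hne⟩ := hσ
        have hz : ∏ j ∈ Finset.univ.filter (fun j : Fin m => r ≤ (j : ℕ)),
            (M (σ j) j).coeff (d j) = 0 :=
          Finset.prod_eq_zero (Finset.mem_filter.mpr ⟨Finset.mem_univ j, hjr⟩)
            (by rw [hMe, hd]; simp [hjr, hne])
        rw [hz, zero_mul, mul_zero]
    rw [Finset.sum_congr rfl fun σ _ => key σ, Finset.sum_ite_mem, Finset.univ_inter,
      map_sum, Finset.mul_sum]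
    refine Finset.sum_congr rfl fun σ hσ => ?_
    rw [_root_.map_mul, MvPolynomial.eval_C, map_prod]
    have hev : ∀ j : Fin m, MvPolynomial.eval (fun p => X p.1.1 p.1.2) (v σ j) =
        (if h : (j : ℕ) < r then
          X ⟨(σ j : ℕ) + r, hlt σ j⟩ ⟨(j : ℕ), hjn j⟩ else 1) := by
      intro j
      simp only [hv]
      by_cases h : (j : ℕ) < r
      · rw [dif_pos h, dif_pos h, MvPolynomial.eval_X]
      · rw [dif_neg h, dif_neg h, _root_.map_one]
    rw [Finset.prod_congr rfl fun j _ => hev j]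
    rw [mul_left_comm]
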